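/- Let C be a coalgebra over a field k and let T : C-Comod_f → Vect_k^f be the forgetful functor from finite-dimensional right C-comodules to finite-dimensional k-vector spaces. Define linear maps i_X : Hom_k(X, X) → C for each finite-dimensional right C-comodule X by i_X(β ⊗ x) := β(x_(0)) x_(1), where β ∈ X*, x ∈ X, (β ⊗ x)(y) = β(y)x, and ρ(x) = x_(0) ⊗ x_(1) is the coaction. Then (C, {i_X}) is a realization of Coend(T); that is, C with these maps satisfies the universal (initial) property of the coend of T. In particular, C can be reconstructed from Coend(T) as a vector space. -/

import Mathlib

/- STATEMENT 3: for a k-coalgebra C and the forgetful functor T from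
finite-dimensional right C-comodules to Vect_k^f, the maps
i_X(β ⊗ x) = β(x₍₀₎) x₍₁₎ make C a realization of Coend(T): they form a
dinatural family and (C, {i_X}) is initial among such data. -/

open TensorProduct

noncomputable section
variable (k : Type) [Field k]
variable (C : Type) [AddCommGroup C] [Module k C] [Coalgebra k C]

/-- A finite-dimensional right `C`-comodule. -/
structure FdComod where
  carrier : Type
  [ab : AddCommGroup carrier]
  [mod : Module k carrier]
  [fin : FiniteDimensional k carrier]
  ρ : carrier →ₗ[k] carrier ⊗[k] C
  coassoc : (TensorProduct.assoc k carrier C C).toLinearMap ∘ₗ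
      (TensorProduct.map ρ LinearMap.id) ∘ₗ ρ
      = (TensorProduct.map LinearMap.id Coalgebra.comul) ∘ₗ ρ
  counit : (TensorProduct.map LinearMap.id Coalgebra.counit) ∘ₗ ρ
      = (TensorProduct.rid k carrier).symm.toLinearMap

attribute [instance] FdComod.ab FdComod.mod FdComod.fin

/-- A morphism of right `C`-comodules. -/
def IsComodHom (X Y : FdComod k C) (f : X.carrier →ₗ[k] Y.carrier) : Prop :=
  Y.ρ ∘ₗ f = (TensorProduct.map f LinearMap.id) ∘ₗ X.ρ

/-- Dinaturality of a family of maps `Hom_k(X,X) → U` indexed by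
finite-dimensional right `C`-comodules: `i_X(f ∘ S) = i_Y(S ∘ f)` for any
comodule morphism `f : Y → X` and linear map `S : X → Y`. -/
def DinatComod (U : Type) [AddCommGroup U] [Module k U]
    (i : ∀ X : FdComod k C, (X.carrier →ₗ[k] X.carrier) →ₗ[k] U) : Prop :=
  ∀ (X Y : FdComod k C) (f : Y.carrier →ₗ[k] X.carrier), IsComodHom k C Y X f →
    ∀ S : X.carrier →ₗ[k] Y.carrier, i X (f ∘ₗ S) = i Y (S ∘ₗ f)

/-- The canonical maps `i_X : Hom_k(X,X) → C`; on a rank-one map `β ⊗ x`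
(i.e. `y ↦ β(y)x`) it is given by `β(x₍₀₎) x₍₁₎`. -/
def canI (X : FdComod k C) : (X.carrier →ₗ[k] X.carrier) →ₗ[k] C :=
  let b := Module.Free.chooseBasis k X.carrier
  ∑ j, ((TensorProduct.lid k C).toLinearMap ∘ₗ
          TensorProduct.map (b.coord j) LinearMap.id ∘ₗ X.ρ) ∘ₗ
        (LinearMap.applyₗ (b j) : (X.carrier →ₗ[k] X.carrier) →ₗ[k] X.carrier)

set_option linter.unusedSectionVars false

namespace CoendProof
variable {k C}

lemma subtype_rTensor_injective (D : Submodule k C) (M : Type) [AddCommGroup M] [Module k M] :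
    Function.Injective (D.subtype.rTensor M) :=
  Module.Flat.rTensor_preserves_injective_linearMap _ D.injective_subtype

def IsCoideal (D : Submodule k C) : Prop :=
  ∀ x ∈ D, (Coalgebra.comul (R := k) x) ∈ LinearMap.range (D.subtype.rTensor C)

def coidealρ (D : Submodule k C) (h : IsCoideal D) : D →ₗ[k] D ⊗[k] C :=
  (LinearEquiv.ofInjective _ (subtype_rTensor_injective D C)).symm.toLinearMap ∘ₗ
    LinearMap.codRestrict _ (Coalgebra.comul ∘ₗ D.subtype) (fun d => h d d.2)

lemma coidealρ_spec (D : Submodule k C) (h : IsCoideal D) :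
    D.subtype.rTensor C ∘ₗ coidealρ D h = Coalgebra.comul ∘ₗ D.subtype := by
  ext d
  have h1 := (LinearEquiv.ofInjective _ (subtype_rTensor_injective D C)).apply_symm_apply
    ⟨Coalgebra.comul (R := k) (d : C), h d d.2⟩
  have h2 := congrArg Subtype.val h1
  rw [LinearEquiv.ofInjective_apply] at h2
  exact h2

lemma coidealρ_apply (D : Submodule k C) (h : IsCoideal D) (d : D) :
    D.subtype.rTensor C (coidealρ D h d) = Coalgebra.comul (R := k) (d : C) :=
  congrFun (congrArg DFunLike.coe (coidealρ_spec D h)) d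

/-- naturality of the associator. -/
lemma assoc_nat {V W : Type} [AddCommGroup V] [Module k V] [AddCommGroup W] [Module k W]
    (f : V →ₗ[k] W) :
    (f.rTensor (C ⊗[k] C)) ∘ₗ (TensorProduct.assoc k V C C).toLinearMap
      = (TensorProduct.assoc k W C C).toLinearMap ∘ₗ ((f.rTensor C).rTensor C) := by
  apply TensorProduct.ext_threefold
  intro x y z
  simp

@[reducible] def toComod (D : Submodule k C) [FiniteDimensional k D] (h : IsCoideal D) : FdComod k C where
  carrier := D
  ρ := coidealρ D h
  coassoc := by
    ext d
    apply subtype_rTensor_injective D (C ⊗[k] C)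
    have l2 : (D.subtype.rTensor C).rTensor C ∘ₗ (coidealρ D h).rTensor C
        = (Coalgebra.comul (R := k) (A := C)).rTensor C ∘ₗ D.subtype.rTensor C := by
      rw [← LinearMap.rTensor_comp, coidealρ_spec, LinearMap.rTensor_comp]
    have r1 : D.subtype.rTensor (C ⊗[k] C) ∘ₗ (Coalgebra.comul (R := k) (A := C)).lTensor D
        = (Coalgebra.comul (R := k) (A := C)).lTensor C ∘ₗ D.subtype.rTensor C := by
      rw [LinearMap.rTensor_comp_lTensor, LinearMap.lTensor_comp_rTensor]
    show D.subtype.rTensor (C ⊗[k] C) ((TensorProduct.assoc k D C C)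
          ((coidealρ D h).rTensor C (coidealρ D h d)))
        = D.subtype.rTensor (C ⊗[k] C)
          ((Coalgebra.comul (R := k) (A := C)).lTensor D (coidealρ D h d))
    calc D.subtype.rTensor (C ⊗[k] C) ((TensorProduct.assoc k D C C)
          ((coidealρ D h).rTensor C (coidealρ D h d)))
        = (TensorProduct.assoc k C C C) ((D.subtype.rTensor C).rTensor C
            ((coidealρ D h).rTensor C (coidealρ D h d))) :=
          LinearMap.congr_fun (assoc_nat D.subtype) _
      _ = (TensorProduct.assoc k C C C) ((Coalgebra.comul (R := k) (A := C)).rTensor C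
            (D.subtype.rTensor C (coidealρ D h d))) := by
          rw [← LinearMap.comp_apply, l2]; rfl
      _ = (TensorProduct.assoc k C C C) ((Coalgebra.comul (R := k) (A := C)).rTensor C
            (Coalgebra.comul (R := k) (d : C))) := by rw [coidealρ_apply]
      _ = (Coalgebra.comul (R := k) (A := C)).lTensor C
            (Coalgebra.comul (R := k) (d : C)) := Coalgebra.coassoc_apply _
      _ = (Coalgebra.comul (R := k) (A := C)).lTensor C
            (D.subtype.rTensor C (coidealρ D h d)) := by rw [coidealρ_apply]
      _ = D.subtype.rTensor (C ⊗[k] C)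
            ((Coalgebra.comul (R := k) (A := C)).lTensor D (coidealρ D h d)) := by
          rw [← LinearMap.comp_apply, ← r1]; rfl
  counit := by
    apply (LinearMap.cancel_left (subtype_rTensor_injective D k)).mp
    have hl : (TensorProduct.map (LinearMap.id (M := D)) (Coalgebra.counit (R := k) (A := C)))
        = (Coalgebra.counit (R := k) (A := C)).lTensor D := rfl
    rw [hl, ← LinearMap.comp_assoc, LinearMap.rTensor_comp_lTensor,
      ← LinearMap.lTensor_comp_rTensor, LinearMap.comp_assoc, coidealρ_spec,
      ← LinearMap.comp_assoc, Coalgebra.lTensor_counit_comp_comul]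
    ext d
    simp

section Maps
variable {V V₂ V₃ W : Type} [AddCommGroup V] [Module k V] [AddCommGroup W] [Module k W]
  [AddCommGroup V₂] [Module k V₂] [AddCommGroup V₃] [Module k V₃]

lemma comp_smulRight (f : V₂ →ₗ[k] V₃) (β : V →ₗ[k] k) (x : V₂) :
    f ∘ₗ β.smulRight x = β.smulRight (f x) := by
  ext v; simp

lemma smulRight_comp (β : V₂ →ₗ[k] k) (x : V₃) (f : V →ₗ[k] V₂) :
    β.smulRight x ∘ₗ f = (β ∘ₗ f).smulRight x := by
  ext v; simp

lemma smulRight_add (β : V →ₗ[k] k) (x y : V₂) :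
    β.smulRight (x + y) = β.smulRight x + β.smulRight y := by
  ext v; simp

lemma smulRight_smul (β : V →ₗ[k] k) (a : k) (x : V₂) :
    β.smulRight (a • x) = a • β.smulRight x := by
  ext v
  simp only [LinearMap.smulRight_apply, LinearMap.smul_apply]
  rw [smul_comm]

lemma sum_coord_smul {ι : Type} [Fintype ι] (b : Module.Basis ι k V) (β : V →ₗ[k] k)
    (t : V ⊗[k] C) :
    ∑ j, β (b j) • (TensorProduct.map (b.coord j) (LinearMap.id : C →ₗ[k] C)) t
      = TensorProduct.map β LinearMap.id t := by
  induction t with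
  | zero => simp
  | tmul y c =>
      simp only [TensorProduct.map_tmul, LinearMap.id_coe, id_eq, TensorProduct.smul_tmul',
        smul_eq_mul, ← TensorProduct.sum_tmul]
      congr 1
      conv_rhs => rw [← b.sum_repr y]
      rw [map_sum]
      simp [Module.Basis.coord_apply, mul_comm]
  | add u v hu hv =>
      simp only [map_add, smul_add, Finset.sum_add_distrib, hu, hv]

end Maps

def gMap (X : FdComod k C) (β : X.carrier →ₗ[k] k) : X.carrier →ₗ[k] C :=
  (TensorProduct.lid k C).toLinearMap ∘ₗ (TensorProduct.map β LinearMap.id) ∘ₗ X.ρ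

lemma gMap_apply (X : FdComod k C) (β : X.carrier →ₗ[k] k) (x : X.carrier) :
    gMap X β x
      = (TensorProduct.lid k C) ((TensorProduct.map β LinearMap.id) (X.ρ x)) := rfl

lemma canI_smulRight (X : FdComod k C) (β : X.carrier →ₗ[k] k) (x : X.carrier) :
    canI k C X (β.smulRight x) = gMap X β x := by
  simp only [canI, gMap, LinearMap.sum_apply, LinearMap.comp_apply, LinearMap.applyₗ_apply_apply,
    LinearMap.smulRight_apply, map_smul, LinearEquiv.coe_coe]
  rw [← sum_coord_smul (Module.Free.chooseBasis k X.carrier) β (X.ρ x), map_sum]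
  simp

lemma gMap_comp (X Y : FdComod k C) (f : Y.carrier →ₗ[k] X.carrier)
    (hf : IsComodHom k C Y X f) (β : X.carrier →ₗ[k] k) :
    (gMap X β) ∘ₗ f = gMap Y (β ∘ₗ f) := by
  have hmap : TensorProduct.map β (LinearMap.id : C →ₗ[k] C) ∘ₗ
      TensorProduct.map f LinearMap.id = TensorProduct.map (β ∘ₗ f) LinearMap.id := by
    rw [← TensorProduct.map_comp, LinearMap.id_comp]
  ext y
  have h1 := LinearMap.congr_fun hf y
  simp only [LinearMap.comp_apply] at h1 ⊢
  rw [gMap_apply, gMap_apply, h1, ← LinearMap.comp_apply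
    (TensorProduct.map β LinearMap.id), hmap]

lemma decomp (X : FdComod k C) (f : X.carrier →ₗ[k] X.carrier) :
    f = ∑ j, ((Module.Free.chooseBasis k X.carrier).coord j).smulRight
        (f (Module.Free.chooseBasis k X.carrier j)) := by
  set b := Module.Free.chooseBasis k X.carrier with hb
  ext y
  simp only [LinearMap.sum_apply, LinearMap.smulRight_apply, Module.Basis.coord_apply]
  conv_lhs => rw [← b.sum_repr y]
  simp only [map_sum, map_smul]

lemma canI_dinat : DinatComod k C C (canI k C) := by
  intro X Y f hf S
  set b := Module.Free.chooseBasis k X.carrier with hb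
  have h1 : f ∘ₗ S = ∑ j, (b.coord j).smulRight (f (S (b j))) := by
    ext y
    simp only [LinearMap.sum_apply, LinearMap.smulRight_apply, Module.Basis.coord_apply,
      LinearMap.comp_apply]
    conv_lhs => rw [← b.sum_repr y]
    simp only [map_sum, map_smul]
  have h2 : S ∘ₗ f = ∑ j, ((b.coord j) ∘ₗ f).smulRight (S (b j)) := by
    ext y
    simp only [LinearMap.sum_apply, LinearMap.smulRight_apply, Module.Basis.coord_apply,
      LinearMap.comp_apply]
    conv_lhs => rw [← b.sum_repr (f y)]
    simp only [map_sum, map_smul]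
  rw [h1, h2, map_sum, map_sum]
  refine Finset.sum_congr rfl fun j _ => ?_
  rw [canI_smulRight, canI_smulRight]
  exact LinearMap.congr_fun (gMap_comp X Y f hf (b.coord j)) (S (b j))

lemma comul_gMap (X : FdComod k C) (β : X.carrier →ₗ[k] k) :
    Coalgebra.comul (R := k) ∘ₗ gMap X β
      = TensorProduct.map (gMap X β) LinearMap.id ∘ₗ X.ρ := by
  have claim1 : ∀ t : X.carrier ⊗[k] C,
      Coalgebra.comul (R := k) ((TensorProduct.lid k C) ((TensorProduct.map β LinearMap.id) t))
        = (TensorProduct.lid k (C ⊗[k] C)) ((TensorProduct.map β LinearMap.id)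
            ((TensorProduct.map LinearMap.id (Coalgebra.comul (R := k) (A := C))) t)) := by
    intro t
    induction t with
    | zero => simp
    | tmul y c => simp
    | add u v hu hv => simp only [map_add, hu, hv]
  have claim2 : ∀ (c : C) (s : X.carrier ⊗[k] C),
      (TensorProduct.lid k (C ⊗[k] C)) ((TensorProduct.map β LinearMap.id)
        ((TensorProduct.assoc k X.carrier C C) (s ⊗ₜ[k] c)))
      = ((TensorProduct.lid k C) ((TensorProduct.map β LinearMap.id) s)) ⊗ₜ[k] c := by
    intro c s
    induction s with
    | zero => simp
    | tmul y c' => simp [TensorProduct.smul_tmul']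
    | add u v hu hv =>
        simp only [TensorProduct.add_tmul, map_add, hu, hv]
  ext x
  have hco := LinearMap.congr_fun X.coassoc x
  simp only [LinearMap.comp_apply, LinearEquiv.coe_coe] at hco ⊢
  rw [gMap_apply, claim1 (X.ρ x), ← hco]
  generalize X.ρ x = t
  induction t with
  | zero => simp
  | tmul y c =>
      simp only [TensorProduct.map_tmul, LinearMap.id_coe, id_eq]
      rw [claim2 c (X.ρ y)]
      rfl
  | add u v hu hv => simp only [map_add, hu, hv]

lemma counit_gMap (X : FdComod k C) (β : X.carrier →ₗ[k] k) :
    Coalgebra.counit (R := k) ∘ₗ gMap X β = β := by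
  have claim : ∀ t : X.carrier ⊗[k] C,
      Coalgebra.counit (R := k) ((TensorProduct.lid k C) ((TensorProduct.map β LinearMap.id) t))
        = β ((TensorProduct.rid k X.carrier)
            ((TensorProduct.map LinearMap.id (Coalgebra.counit (R := k) (A := C))) t)) := by
    intro t
    induction t with
    | zero => simp
    | tmul y c => simp [mul_comm]
    | add u v hu hv => simp only [map_add, hu, hv]
  ext x
  have hcu := LinearMap.congr_fun X.counit x
  simp only [LinearMap.comp_apply, LinearEquiv.coe_coe] at hcu ⊢
  rw [gMap_apply, claim (X.ρ x), hcu]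
  simp

lemma isCoideal_range_gMap (X : FdComod k C) (β : X.carrier →ₗ[k] k) :
    IsCoideal (LinearMap.range (gMap X β)) := by
  rintro _ ⟨x, rfl⟩
  have h := LinearMap.congr_fun (comul_gMap X β) x
  simp only [LinearMap.comp_apply] at h
  rw [h]
  refine ⟨(gMap X β).rangeRestrict.rTensor C (X.ρ x), ?_⟩
  rw [← LinearMap.comp_apply, ← LinearMap.rTensor_comp,
    LinearMap.subtype_comp_codRestrict]
  rfl

lemma rangeRestrict_hom (X : FdComod k C) (β : X.carrier →ₗ[k] k) :
    IsComodHom k C X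
      (toComod (LinearMap.range (gMap X β)) (isCoideal_range_gMap X β))
      (gMap X β).rangeRestrict := by
  unfold IsComodHom
  apply (LinearMap.cancel_left
    (subtype_rTensor_injective (LinearMap.range (gMap X β)) C)).mp
  rw [← LinearMap.comp_assoc]
  rw [show (toComod (LinearMap.range (gMap X β)) (isCoideal_range_gMap X β)).ρ
      = coidealρ _ (isCoideal_range_gMap X β) from rfl]
  rw [coidealρ_spec, LinearMap.comp_assoc, LinearMap.subtype_comp_codRestrict,
    comul_gMap]
  rw [show (TensorProduct.map (gMap X β).rangeRestrict (LinearMap.id : C →ₗ[k] C))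
      = (gMap X β).rangeRestrict.rTensor C from rfl]
  rw [← LinearMap.comp_assoc, ← LinearMap.rTensor_comp,
    LinearMap.subtype_comp_codRestrict]
  rfl

lemma inclusion_hom (D E : Submodule k C) [FiniteDimensional k D] [FiniteDimensional k E]
    (hD : IsCoideal D) (hE : IsCoideal E) (hle : D ≤ E) :
    IsComodHom k C (toComod D hD) (toComod E hE) (Submodule.inclusion hle) := by
  unfold IsComodHom
  apply (LinearMap.cancel_left (subtype_rTensor_injective E C)).mp
  rw [← LinearMap.comp_assoc]
  rw [show (toComod E hE).ρ = coidealρ E hE from rfl,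
    show (toComod D hD).ρ = coidealρ D hD from rfl]
  rw [coidealρ_spec, LinearMap.comp_assoc, Submodule.subtype_comp_inclusion]
  rw [show (TensorProduct.map (Submodule.inclusion hle) (LinearMap.id : C →ₗ[k] C))
      = (Submodule.inclusion hle).rTensor C from rfl]
  rw [← LinearMap.comp_assoc, ← LinearMap.rTensor_comp,
    Submodule.subtype_comp_inclusion, coidealρ_spec]

lemma canI_counit (D : Submodule k C) [FiniteDimensional k D] (hD : IsCoideal D) (d : D) :
    canI k C (toComod D hD)
      ((Coalgebra.counit (R := k) ∘ₗ D.subtype).smulRight d) = (d : C) := by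
  rw [canI_smulRight, gMap_apply]
  show (TensorProduct.lid k C) ((TensorProduct.map
      ((Coalgebra.counit : C →ₗ[k] k) ∘ₗ D.subtype) (LinearMap.id : C →ₗ[k] C))
      (coidealρ D hD d)) = (d : C)
  have h1 : (Coalgebra.counit (R := k) (A := C)).rTensor C ∘ₗ D.subtype.rTensor C
      = TensorProduct.map ((Coalgebra.counit : C →ₗ[k] k) ∘ₗ D.subtype)
          (LinearMap.id : C →ₗ[k] C) := by
    rw [← LinearMap.rTensor_comp]; rfl
  rw [← h1, LinearMap.comp_apply, coidealρ_apply D hD d, Coalgebra.rTensor_counit_comul]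
  simp

lemma exists_coideal (c : C) :
    ∃ D : Submodule k C, FiniteDimensional k D ∧ IsCoideal D ∧ c ∈ D := by
  classical
  set b := Module.Free.chooseBasis k C with hbdef
  set R : Module.Free.ChooseBasisIndex k C → (C ⊗[k] C) →ₗ[k] C := fun j =>
    (TensorProduct.rid k C).toLinearMap ∘ₗ (b.coord j).lTensor C with hRdef
  have hR : ∀ (j) (x y : C), R j (x ⊗ₜ[k] y) = b.repr y j • x := by
    intro j x y; simp [hRdef, Module.Basis.coord_apply]
  have hrep : ∀ t : C ⊗[k] C, ∃ S : Finset (Module.Free.ChooseBasisIndex k C),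
      (∀ j ∉ S, R j t = 0) ∧ t = ∑ j ∈ S, (R j t) ⊗ₜ[k] b j := by
    intro t
    induction t with
    | zero => exact ⟨∅, by simp, by simp⟩
    | tmul x y =>
        refine ⟨(b.repr y).support, ?_, ?_⟩
        · intro j hj
          rw [hR, Finsupp.notMem_support_iff.mp hj, zero_smul]
        · conv_lhs => rw [← b.linearCombination_repr y]
          rw [Finsupp.linearCombination_apply, Finsupp.sum, TensorProduct.tmul_sum]
          refine Finset.sum_congr rfl fun j hj => ?_
          rw [hR, TensorProduct.tmul_smul, TensorProduct.smul_tmul']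
    | add u v hu hv =>
        obtain ⟨Su, hu0, hurep⟩ := hu
        obtain ⟨Sv, hv0, hvrep⟩ := hv
        refine ⟨Su ∪ Sv, ?_, ?_⟩
        · intro j hj
          rw [map_add, hu0 j (fun h => hj (Finset.mem_union_left _ h)),
            hv0 j (fun h => hj (Finset.mem_union_right _ h)), add_zero]
        · have h1 : ∑ j ∈ Su ∪ Sv, (R j u) ⊗ₜ[k] b j = ∑ j ∈ Su, (R j u) ⊗ₜ[k] b j :=
            (Finset.sum_subset Finset.subset_union_left (fun j _ hnj => by
              rw [hu0 j hnj, TensorProduct.zero_tmul])).symm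
          have h2 : ∑ j ∈ Su ∪ Sv, (R j v) ⊗ₜ[k] b j = ∑ j ∈ Sv, (R j v) ⊗ₜ[k] b j :=
            (Finset.sum_subset Finset.subset_union_right (fun j _ hnj => by
              rw [hv0 j hnj, TensorProduct.zero_tmul])).symm
          calc u + v = (∑ j ∈ Su ∪ Sv, (R j u) ⊗ₜ[k] b j)
                + ∑ j ∈ Su ∪ Sv, (R j v) ⊗ₜ[k] b j := by rw [h1, h2, ← hurep, ← hvrep]
            _ = ∑ j ∈ Su ∪ Sv, (R j (u + v)) ⊗ₜ[k] b j := by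
                rw [← Finset.sum_add_distrib]
                exact Finset.sum_congr rfl fun j _ => by
                  rw [map_add, TensorProduct.add_tmul]
  obtain ⟨S, hS0, hSrep⟩ := hrep (Coalgebra.comul (R := k) c)
  set d : Module.Free.ChooseBasisIndex k C → C :=
    fun j => R j (Coalgebra.comul (R := k) c) with hd
  set D : Submodule k C := Submodule.span k ↑(S.image d) with hDdef
  have hmem : ∀ j, j ∈ S → d j ∈ D := fun j hj =>
    Submodule.subset_span (Finset.mem_coe.mpr (Finset.mem_image_of_mem d hj))
  have hc : c = ∑ j ∈ S, Coalgebra.counit (R := k) (b j) • d j := by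
    have h0 := congrArg ((TensorProduct.rid k C).toLinearMap ∘ₗ
      (Coalgebra.counit (R := k) (A := C)).lTensor C) hSrep
    simp only [LinearMap.comp_apply, LinearEquiv.coe_coe, map_sum,
      LinearMap.lTensor_tmul, TensorProduct.rid_tmul,
      Coalgebra.lTensor_counit_comul] at h0
    simpa using h0
  have hgen : ∀ j ∈ S, Coalgebra.comul (R := k) (d j)
      ∈ LinearMap.range (D.subtype.rTensor C) := by
    intro j hj
    set E : (C ⊗[k] C) ⊗[k] C →ₗ[k] C ⊗[k] C :=
      (TensorProduct.rid k (C ⊗[k] C)).toLinearMap ∘ₗ (b.coord j).lTensor (C ⊗[k] C)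
      with hEdef
    have claimE : ∀ (s : C ⊗[k] C) (y : C), E (s ⊗ₜ[k] y) = b.repr y j • s := by
      intro s y; simp [hEdef, Module.Basis.coord_apply]
    have claimA : ∀ (x : C) (s : C ⊗[k] C),
        E ((TensorProduct.assoc k C C C).symm (x ⊗ₜ[k] s)) = x ⊗ₜ[k] R j s := by
      intro x s
      induction s with
      | zero => simp
      | tmul u v =>
          rw [TensorProduct.assoc_symm_tmul, claimE, hR,
            TensorProduct.smul_tmul', TensorProduct.smul_tmul, TensorProduct.tmul_smul]
      | add s1 s2 h1 h2 =>
          rw [TensorProduct.tmul_add, map_add, map_add, h1, h2, map_add,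
            TensorProduct.tmul_add]
    have key : Coalgebra.comul (R := k) (d j)
        = ∑ j' ∈ S, d j' ⊗ₜ[k] R j (Coalgebra.comul (R := k) (b j')) := by
      have e1 : E ((Coalgebra.comul (R := k) (A := C)).rTensor C
            (Coalgebra.comul (R := k) c)) = Coalgebra.comul (R := k) (d j) := by
        rw [hSrep, map_sum, map_sum]
        have : ∀ j' ∈ S, E ((Coalgebra.comul (R := k) (A := C)).rTensor C
            (d j' ⊗ₜ[k] b j'))
            = if j' = j then Coalgebra.comul (R := k) (d j') else 0 := by
          intro j' _
          rw [LinearMap.rTensor_tmul, claimE, Module.Basis.repr_self_apply]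
          split <;> simp
        rw [Finset.sum_congr rfl this, Finset.sum_ite_eq' S j
          (fun j' => Coalgebra.comul (R := k) (d j')), if_pos hj]
      have e2 : E ((Coalgebra.comul (R := k) (A := C)).rTensor C
            (Coalgebra.comul (R := k) c))
          = ∑ j' ∈ S, d j' ⊗ₜ[k] R j (Coalgebra.comul (R := k) (b j')) := by
        rw [← Coalgebra.coassoc_symm_apply, hSrep, map_sum]
        simp only [LinearMap.lTensor_tmul]
        rw [map_sum, map_sum]
        exact Finset.sum_congr rfl fun j' _ =>
          claimA (d j') (Coalgebra.comul (R := k) (b j'))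
      rw [← e1, e2]
    rw [key]
    refine ⟨∑ j' ∈ S.attach, (⟨d j', hmem j' j'.2⟩ : D) ⊗ₜ[k]
      R j (Coalgebra.comul (R := k) (b j')), ?_⟩
    rw [map_sum, ← Finset.sum_attach S
      (fun j' => d j' ⊗ₜ[k] R j (Coalgebra.comul (R := k) (b j')))]
    exact Finset.sum_congr rfl fun j' _ => by rw [LinearMap.rTensor_tmul]; rfl
  refine ⟨D, inferInstance, ?_, ?_⟩
  · intro x hx
    refine Submodule.span_induction (fun y hy => ?_) (by simp) ?_ ?_ hx
    · obtain ⟨j, hj, rfl⟩ := Finset.mem_image.mp hy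
      exact hgen j hj
    · intro y z _ _ py pz
      rw [map_add]; exact add_mem py pz
    · intro a y _ py
      rw [map_smul]; exact Submodule.smul_mem _ a py
  · rw [hc]
    exact Submodule.sum_mem _ fun j hj => Submodule.smul_mem _ _ (hmem j hj)

lemma eq_of_smulRight {X : FdComod k C} {U : Type} [AddCommGroup U] [Module k U]
    (P Q : (X.carrier →ₗ[k] X.carrier) →ₗ[k] U)
    (h : ∀ (β : X.carrier →ₗ[k] k) (x : X.carrier),
      P (β.smulRight x) = Q (β.smulRight x)) : P = Q := by
  ext f
  conv_lhs => rw [decomp X f]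
  conv_rhs => rw [decomp X f]
  rw [map_sum, map_sum]
  exact Finset.sum_congr rfl fun j _ => h _ _

lemma isCoideal_sup {D E : Submodule k C} (hD : IsCoideal D) (hE : IsCoideal E) :
    IsCoideal (D ⊔ E) := by
  intro x hx
  obtain ⟨y, hy, z, hz, rfl⟩ := Submodule.mem_sup.mp hx
  rw [map_add]
  have incl : ∀ (F : Submodule k C) (hle : F ≤ D ⊔ E),
      LinearMap.range (F.subtype.rTensor C)
        ≤ LinearMap.range ((D ⊔ E).subtype.rTensor C) := by
    intro F hle
    have h : F.subtype = (D ⊔ E).subtype ∘ₗ Submodule.inclusion hle := by ext; rfl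
    rw [h, LinearMap.rTensor_comp]
    exact LinearMap.range_comp_le_range _ _
  exact add_mem (incl D le_sup_left (hD y hy)) (incl E le_sup_right (hE z hz))

section Phi
variable {U : Type} [AddCommGroup U] [Module k U]
variable (iU : ∀ X : FdComod k C, (X.carrier →ₗ[k] X.carrier) →ₗ[k] U)

def phiAt (D : Submodule k C) [FiniteDimensional k D] (hD : IsCoideal D)
    (c : C) (hc : c ∈ D) : U :=
  iU (toComod D hD) ((Coalgebra.counit (R := k) ∘ₗ D.subtype).smulRight ⟨c, hc⟩)

lemma phiAt_mono (hdin : DinatComod k C U iU) (D E : Submodule k C) [FiniteDimensional k D] [FiniteDimensional k E]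
    (hD : IsCoideal D) (hE : IsCoideal E) (hle : D ≤ E) (c : C) (hc : c ∈ D) :
    phiAt iU D hD c hc = phiAt iU E hE c (hle hc) := by
  have h := hdin (toComod E hE) (toComod D hD) (Submodule.inclusion hle)
    (inclusion_hom D E hD hE hle)
    ((Coalgebra.counit (R := k) ∘ₗ E.subtype).smulRight ⟨c, hc⟩)
  rw [comp_smulRight, smulRight_comp] at h
  have h2 : (Coalgebra.counit (R := k) ∘ₗ E.subtype) ∘ₗ Submodule.inclusion hle
      = Coalgebra.counit (R := k) ∘ₗ D.subtype := by
    rw [LinearMap.comp_assoc, Submodule.subtype_comp_inclusion]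
  rw [h2] at h
  exact h.symm

lemma phiAt_eq (hdin : DinatComod k C U iU) (D E : Submodule k C) [FiniteDimensional k D] [FiniteDimensional k E]
    (hD : IsCoideal D) (hE : IsCoideal E) (c : C) (hcD : c ∈ D) (hcE : c ∈ E) :
    phiAt iU D hD c hcD = phiAt iU E hE c hcE := by
  haveI : FiniteDimensional k ↥(D ⊔ E) := Submodule.finiteDimensional_sup D E
  rw [phiAt_mono iU hdin D (D ⊔ E) hD (isCoideal_sup hD hE) le_sup_left c hcD,
    phiAt_mono iU hdin E (D ⊔ E) hE (isCoideal_sup hD hE) le_sup_right c hcE]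

def chooseD (c : C) : Submodule k C := (exists_coideal c).choose

instance chooseD_fin (c : C) : FiniteDimensional k (chooseD (k := k) c) :=
  (exists_coideal c).choose_spec.1

lemma chooseD_coideal (c : C) : IsCoideal (chooseD (k := k) c) :=
  (exists_coideal c).choose_spec.2.1

lemma mem_chooseD (c : C) : c ∈ chooseD (k := k) c :=
  (exists_coideal c).choose_spec.2.2

def phiFun (c : C) : U :=
  phiAt iU (chooseD (k := k) c) (chooseD_coideal c) c (mem_chooseD (k := k) c)

lemma phiFun_eq (hdin : DinatComod k C U iU) (D : Submodule k C) [FiniteDimensional k D] (hD : IsCoideal D)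
    (c : C) (hc : c ∈ D) : phiFun iU c = phiAt iU D hD c hc :=
  phiAt_eq iU hdin _ D (chooseD_coideal c) hD c (mem_chooseD (k := k) c) hc

def phi (hdin : DinatComod k C U iU) : C →ₗ[k] U where
  toFun := phiFun iU
  map_add' c₁ c₂ := by
    haveI : FiniteDimensional k ↥(chooseD (k := k) c₁ ⊔ chooseD (k := k) c₂) :=
      Submodule.finiteDimensional_sup _ _
    have hD : IsCoideal (chooseD (k := k) c₁ ⊔ chooseD (k := k) c₂) :=
      isCoideal_sup (chooseD_coideal c₁) (chooseD_coideal c₂)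
    have h1 : c₁ ∈ chooseD (k := k) c₁ ⊔ chooseD (k := k) c₂ := Submodule.mem_sup_left (mem_chooseD (k := k) c₁)
    have h2 : c₂ ∈ chooseD (k := k) c₁ ⊔ chooseD (k := k) c₂ := Submodule.mem_sup_right (mem_chooseD (k := k) c₂)
    rw [phiFun_eq iU hdin _ hD (c₁ + c₂) (add_mem h1 h2),
      phiFun_eq iU hdin _ hD c₁ h1, phiFun_eq iU hdin _ hD c₂ h2]
    unfold phiAt
    rw [show (⟨c₁ + c₂, add_mem h1 h2⟩ : ↥(chooseD (k := k) c₁ ⊔ chooseD (k := k) c₂))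
      = ⟨c₁, h1⟩ + ⟨c₂, h2⟩ from rfl, smulRight_add, map_add]
  map_smul' a c := by
    have h1 : a • c ∈ chooseD (k := k) c := Submodule.smul_mem _ a (mem_chooseD (k := k) c)
    rw [RingHom.id_apply]
    show phiFun iU (a • c) = a • phiFun iU c
    rw [phiFun_eq iU hdin _ (chooseD_coideal c) (a • c) h1]
    unfold phiFun phiAt
    rw [show (⟨a • c, h1⟩ : ↥(chooseD (k := k) c)) = a • ⟨c, mem_chooseD (k := k) c⟩ from rfl,
      smulRight_smul, map_smul]

lemma phi_canI (hdin : DinatComod k C U iU) (X : FdComod k C) : (phi iU hdin) ∘ₗ canI k C X = iU X := by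
  apply eq_of_smulRight
  intro β x
  rw [LinearMap.comp_apply, canI_smulRight]
  have hD := isCoideal_range_gMap X β
  have hmem : gMap X β x ∈ LinearMap.range (gMap X β) := ⟨x, rfl⟩
  have h2 := hdin (toComod (LinearMap.range (gMap X β)) hD) X
    ((gMap X β).rangeRestrict) (rangeRestrict_hom X β)
    ((Coalgebra.counit (R := k) ∘ₗ (LinearMap.range (gMap X β)).subtype).smulRight x)
  rw [comp_smulRight, smulRight_comp] at h2
  have e2 : (Coalgebra.counit (R := k) ∘ₗ (LinearMap.range (gMap X β)).subtype) ∘ₗ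
      (gMap X β).rangeRestrict = β := by
    rw [LinearMap.comp_assoc, LinearMap.subtype_comp_codRestrict, counit_gMap]
  rw [e2] at h2
  show phiFun iU (gMap X β x) = iU X (β.smulRight x)
  rw [phiFun_eq iU hdin _ hD (gMap X β x) hmem]
  exact h2

lemma phi_unique (hdin : DinatComod k C U iU) (ψ : C →ₗ[k] U) (hψ : ∀ X : FdComod k C, ψ ∘ₗ canI k C X = iU X) :
    ψ = phi iU hdin := by
  ext c
  have h1 := canI_counit (chooseD (k := k) c) (chooseD_coideal c) ⟨c, mem_chooseD (k := k) c⟩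
  calc ψ c = ψ (canI k C (toComod (chooseD (k := k) c) (chooseD_coideal c))
        ((Coalgebra.counit (R := k) ∘ₗ (chooseD (k := k) c).subtype).smulRight
          ⟨c, mem_chooseD (k := k) c⟩)) := by rw [h1]
    _ = iU (toComod (chooseD (k := k) c) (chooseD_coideal c))
        ((Coalgebra.counit (R := k) ∘ₗ (chooseD (k := k) c).subtype).smulRight
          ⟨c, mem_chooseD (k := k) c⟩) := by
        rw [← hψ (toComod (chooseD (k := k) c) (chooseD_coideal c))]; rfl
    _ = phi iU hdin c := rfl

end Phi

end CoendProof

/-- `C` together with the maps `i_X(β ⊗ x) = β(x₍₀₎)x₍₁₎` is a realization of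
the coend of the forgetful functor on finite-dimensional right `C`-comodules. -/
theorem coalgebra_is_coend_of_forget :
    (∀ (X : FdComod k C) (β : X.carrier →ₗ[k] k) (x : X.carrier),
        canI k C X (β.smulRight x)
          = (TensorProduct.lid k C) ((TensorProduct.map β LinearMap.id) (X.ρ x))) ∧
    DinatComod k C C (canI k C) ∧
    (∀ (U : Type) [AddCommGroup U] [Module k U]
        (iU : ∀ X : FdComod k C, (X.carrier →ₗ[k] X.carrier) →ₗ[k] U),
        DinatComod k C U iU →
        ∃! φ : C →ₗ[k] U, ∀ X : FdComod k C, φ ∘ₗ canI k C X = iU X) := by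
  refine ⟨fun X β x => (CoendProof.canI_smulRight X β x).trans
      (CoendProof.gMap_apply X β x), CoendProof.canI_dinat, ?_⟩
  intro U _ _ iU hdin
  exact ⟨CoendProof.phi iU hdin, CoendProof.phi_canI iU hdin,
    fun ψ hψ => CoendProof.phi_unique iU hdin ψ hψ⟩
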